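/- There exists a unique real number c ∈ (0, √3/2) such that ∫₀^c dτ/(2 − √(1+4τ²)) = 1, and this number satisfies 0.6759893 < c < 0.6759894. -/

import Mathlib

open MeasureTheory



lemma log_upper_bound {X x ax q : ℝ} (k n : ℕ) (hax : |x| = ax) (hax1 : ax < 1) (hx1 : x < 1)
    (hX : X = 2^k * (1 - x))
    (hq : k * 0.6931471808 - (∑ i ∈ Finset.range n, x^(i+1)/(i+1)) + ax^(n+1)/(1-ax) ≤ q) :
    Real.log X ≤ q := by
  have hx : |x| < 1 := by rw [hax]; exact hax1
  have h := Real.abs_log_sub_add_sum_range_le hx n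
  rw [abs_le, hax] at h
  have h2 : Real.log X = k * Real.log 2 + Real.log (1-x) := by
    rw [hX, Real.log_mul (by positivity) (by linarith), Real.log_pow]
  have hk : (k:ℝ) * Real.log 2 ≤ k * 0.6931471808 :=
    mul_le_mul_of_nonneg_left Real.log_two_lt_d9.le (Nat.cast_nonneg k)
  linarith [h.1, h.2]

lemma log_lower_bound {X x ax q : ℝ} (k n : ℕ) (hax : |x| = ax) (hax1 : ax < 1) (hx1 : x < 1)
    (hX : X = 2^k * (1 - x))
    (hq : q ≤ k * 0.6931471803 - (∑ i ∈ Finset.range n, x^(i+1)/(i+1)) - ax^(n+1)/(1-ax)) :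
    q ≤ Real.log X := by
  have hx : |x| < 1 := by rw [hax]; exact hax1
  have h := Real.abs_log_sub_add_sum_range_le hx n
  rw [abs_le, hax] at h
  have h2 : Real.log X = k * Real.log 2 + Real.log (1-x) := by
    rw [hX, Real.log_mul (by positivity) (by linarith), Real.log_pow]
  have hk : (k:ℝ) * 0.6931471803 ≤ k * Real.log 2 :=
    mul_le_mul_of_nonneg_left Real.log_two_gt_d9.le (Nat.cast_nonneg k)
  linarith [h.1, h.2]

example : Real.log 3 ≤ 1.0986123 := by
  apply log_upper_bound (x := 1/4) 2 15 (abs_of_nonneg (by norm_num)) (by norm_num) (by norm_num) (by norm_num)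
  norm_num [Finset.sum_range_succ]

example : (1.0986122:ℝ) ≤ Real.log 3 := by
  apply log_lower_bound (x := 1/4) 2 15 (abs_of_nonneg (by norm_num)) (by norm_num) (by norm_num) (by norm_num)
  norm_num [Finset.sum_range_succ]

noncomputable def Goff (c : ℝ) : ℝ :=
  (Real.log (Real.sqrt 3 + 2*c) - Real.log (Real.sqrt 3 - 2*c)
   + Real.log (Real.sqrt 3 * Real.sqrt (1+4*c^2) + 4*c)
   - Real.log (Real.sqrt 3 * Real.sqrt (1+4*c^2) - 4*c)) / (2 * Real.sqrt 3)
  - Real.log (2*c + Real.sqrt (1+4*c^2)) / 2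

lemma Goff_hasDerivAt {c : ℝ} (h0 : 0 ≤ c) (h1 : c < Real.sqrt 3 / 2) :
    HasDerivAt Goff (1 / (2 - Real.sqrt (1 + 4*c^2))) c := by
  have hrpos : 0 < Real.sqrt 3 := Real.sqrt_pos.mpr (by norm_num)
  have hr2 : Real.sqrt 3 ^ 2 = 3 := Real.sq_sqrt (by norm_num)
  set r := Real.sqrt 3 with hrdef
  have h2c : 2*c < r := by rw [lt_div_iff₀ (by norm_num)] at h1; linarith
  have hc2 : 4*c^2 < 3 := by nlinarith
  have hs2pos : (0:ℝ) < 1 + 4*c^2 := by positivity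
  have hspos : 0 < Real.sqrt (1+4*c^2) := Real.sqrt_pos.mpr hs2pos
  have hs2 : Real.sqrt (1+4*c^2) ^ 2 = 1 + 4*c^2 := Real.sq_sqrt hs2pos.le
  set s := Real.sqrt (1+4*c^2) with hsdef
  have hslt2 : s < 2 := by
    rw [hsdef, show (2:ℝ) = Real.sqrt 4 by rw [show (4:ℝ) = 2^2 by norm_num, Real.sqrt_sq (by norm_num)]]
    exact Real.sqrt_lt_sqrt hs2pos.le (by linarith)
  have hs1 : 1 ≤ s := by nlinarith
  have hrs2 : (r*s)^2 = 3*(1+4*c^2) := by rw [mul_pow, hr2, hs2]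
  have hrspos : 0 < r*s := mul_pos hrpos hspos
  have hrs4c : 4*c < r*s := by nlinarith
  have hp1 : (0:ℝ) < r + 2*c := by linarith
  have hp2 : (0:ℝ) < r - 2*c := by linarith
  have hp3 : (0:ℝ) < r*s + 4*c := by linarith
  have hp4 : (0:ℝ) < r*s - 4*c := by linarith
  have hp5 : (0:ℝ) < 2*c + s := by linarith
  have hsder : HasDerivAt (fun x : ℝ => Real.sqrt (1+4*x^2)) (4*c/s) c := by
    have hinner : HasDerivAt (fun x : ℝ => 1+4*x^2) (8*c) c := by
      have := ((hasDerivAt_pow 2 c).const_mul (4:ℝ)).const_add (1:ℝ)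
      refine this.congr_deriv ?_
      norm_num; ring
    have := (Real.hasDerivAt_sqrt hs2pos.ne').comp c hinner
    refine this.congr_deriv ?_
    rw [← hsdef]; field_simp; ring
  have ht1 : HasDerivAt (fun x : ℝ => Real.log (r + 2*x)) (2/(r+2*c)) c := by
    have hlin : HasDerivAt (fun x : ℝ => r + 2*x) 2 c := by
      simpa using ((hasDerivAt_id c).const_mul (2:ℝ)).const_add r
    have := (Real.hasDerivAt_log hp1.ne').comp c hlin
    refine this.congr_deriv ?_; ring
  have ht2 : HasDerivAt (fun x : ℝ => Real.log (r - 2*x)) (-2/(r-2*c)) c := by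
    have hlin : HasDerivAt (fun x : ℝ => r - 2*x) (-2) c := by
      simpa using ((hasDerivAt_id c).const_mul (2:ℝ)).const_sub r
    have := (Real.hasDerivAt_log hp2.ne').comp c hlin
    refine this.congr_deriv ?_; ring
  have ht3 : HasDerivAt (fun x : ℝ => Real.log (r * Real.sqrt (1+4*x^2) + 4*x))
      ((r*(4*c/s)+4)/(r*s+4*c)) c := by
    have hlin : HasDerivAt (fun x : ℝ => r * Real.sqrt (1+4*x^2) + 4*x) (r*(4*c/s)+4) c := by
      have h4 : HasDerivAt (fun x : ℝ => 4*x) 4 c := by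
        simpa using (hasDerivAt_id c).const_mul (4:ℝ)
      exact (hsder.const_mul r).add h4
    have := (Real.hasDerivAt_log hp3.ne').comp c hlin
    refine this.congr_deriv ?_; ring
  have ht4 : HasDerivAt (fun x : ℝ => Real.log (r * Real.sqrt (1+4*x^2) - 4*x))
      ((r*(4*c/s)-4)/(r*s-4*c)) c := by
    have hlin : HasDerivAt (fun x : ℝ => r * Real.sqrt (1+4*x^2) - 4*x) (r*(4*c/s)-4) c := by
      have h4 : HasDerivAt (fun x : ℝ => 4*x) 4 c := by
        simpa using (hasDerivAt_id c).const_mul (4:ℝ)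
      exact (hsder.const_mul r).sub h4
    have := (Real.hasDerivAt_log hp4.ne').comp c hlin
    refine this.congr_deriv ?_; ring
  have ht5 : HasDerivAt (fun x : ℝ => Real.log (2*x + Real.sqrt (1+4*x^2)))
      ((2+4*c/s)/(2*c+s)) c := by
    have hlin : HasDerivAt (fun x : ℝ => 2*x + Real.sqrt (1+4*x^2)) (2+4*c/s) c := by
      have h4 : HasDerivAt (fun x : ℝ => 2*x) 2 c := by
        simpa using (hasDerivAt_id c).const_mul (2:ℝ)
      exact h4.add hsder
    have := (Real.hasDerivAt_log hp5.ne').comp c hlin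
    refine this.congr_deriv ?_; ring
  have htotal := ((((ht1.sub ht2).add ht3).sub ht4).div_const (2*r)).sub (ht5.div_const 2)
  have hGeq : Goff = fun x : ℝ =>
      ((Real.log (r + 2*x) - Real.log (r - 2*x)
        + Real.log (r * Real.sqrt (1+4*x^2) + 4*x))
        - Real.log (r * Real.sqrt (1+4*x^2) - 4*x)) / (2*r)
      - Real.log (2*x + Real.sqrt (1+4*x^2)) / 2 := rfl
  rw [hGeq]
  refine htotal.congr_deriv ?_
  have h2s : (0:ℝ) < 2 - s := by linarith
  have h6n := h2s.ne'
  have h7n : r*s - c*4 ≠ 0 := by intro h; linarith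
  have h8n : r*s + c*4 ≠ 0 := by intro h; linarith
  rw [eq_div_iff h6n]
  field_simp
  linear_combination (64*r^1*s^1*c^3 + 8*r^1*s^2*c^1 + 32*r^1*s^2*c^2 + 32*r^1*s^2*c^3 + 4*r^1*s^3 + 16*r^1*s^3*c^2 - 8*r^1*s^4*c^1 - 4*r^1*s^5 - 8*r^3*s^2*c^1 - 4*r^3*s^3) * hr2 + (64*r^1*s^1*c^3 - 24*r^1*s^2*c^1 + 32*r^1*s^2*c^2 - 12*r^1*s^3) * hs2

lemma sqrt_lt_two' {t : ℝ} (h2 : 4*t^2 < 3) : Real.sqrt (1+4*t^2) < 2 := by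
  rw [Real.sqrt_lt' (by norm_num)]; nlinarith

lemma four_sq_lt {t : ℝ} (h0 : 0 ≤ t) (h1 : t < Real.sqrt 3 / 2) : 4*t^2 < 3 := by
  have hr2 : Real.sqrt 3 ^ 2 = 3 := Real.sq_sqrt (by norm_num)
  have hrpos : 0 < Real.sqrt 3 := Real.sqrt_pos.mpr (by norm_num)
  nlinarith

lemma Goff_zero : Goff 0 = 0 := by
  norm_num [Goff]

lemma Goff_integral {x : ℝ} (h0 : 0 ≤ x) (h1 : x < Real.sqrt 3 / 2) :
    ∫ τ in (0:ℝ)..x, 1/(2 - Real.sqrt (1 + 4*τ^2)) = Goff x := by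
  have key : ∫ τ in (0:ℝ)..x, 1/(2 - Real.sqrt (1 + 4*τ^2)) = Goff x - Goff 0 := by
    apply intervalIntegral.integral_eq_sub_of_hasDerivAt
    · intro t ht
      rw [Set.uIcc_of_le h0] at ht
      exact Goff_hasDerivAt ht.1 (lt_of_le_of_lt ht.2 h1)
    · apply ContinuousOn.intervalIntegrable
      apply ContinuousOn.div continuousOn_const
      · exact (continuous_const.sub (Real.continuous_sqrt.comp (by continuity))).continuousOn
      · intro t ht
        rw [Set.uIcc_of_le h0] at ht
        have h2 : Real.sqrt (1+4*t^2) < 2 :=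
          sqrt_lt_two' (four_sq_lt ht.1 (lt_of_le_of_lt ht.2 h1))
        have : (0:ℝ) < 2 - Real.sqrt (1+4*t^2) := by linarith
        exact this.ne'
  rw [key, Goff_zero, sub_zero]

lemma Goff_strictMono : StrictMonoOn Goff (Set.Ico 0 (Real.sqrt 3 / 2)) := by
  apply strictMonoOn_of_deriv_pos (convex_Ico _ _)
  · intro t ht
    exact (Goff_hasDerivAt ht.1 ht.2).continuousAt.continuousWithinAt
  · intro t ht
    rw [interior_Ico] at ht
    rw [(Goff_hasDerivAt ht.1.le ht.2).deriv]
    have h2 : Real.sqrt (1+4*t^2) < 2 := sqrt_lt_two' (four_sq_lt ht.1.le ht.2)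
    have : (0:ℝ) < 2 - Real.sqrt (1+4*t^2) := by linarith
    positivity


set_option maxHeartbeats 2000000 in
lemma Goff_a_lt : Goff 0.6759893 < 1 := by
  have hrpos : 0 < Real.sqrt 3 := Real.sqrt_pos.mpr (by norm_num)
  have hrlo : (43301270189/25000000000:ℝ) < Real.sqrt 3 := (Real.lt_sqrt (by norm_num)).mpr (by norm_num)
  have hrhi : Real.sqrt 3 < (4330127019/2500000000:ℝ) := (Real.sqrt_lt' (by norm_num)).mpr (by norm_num)
  have hslo : (16816200923/10000000000:ℝ) < Real.sqrt (1+4*(0.6759893:ℝ)^2) := (Real.lt_sqrt (by norm_num)).mpr (by norm_num)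
  have hshi : Real.sqrt (1+4*(0.6759893:ℝ)^2) < (4204050231/2500000000:ℝ) := (Real.sqrt_lt' (by norm_num)).mpr (by norm_num)
  set r := Real.sqrt 3 with hrdef
  set s := Real.sqrt (1+4*(0.6759893:ℝ)^2) with hsdef
  have hspos : 0 < s := lt_trans (by norm_num) hslo
  have hp1 : (0:ℝ) < r + 2*0.6759893 := by positivity
  have hp2 : (0:ℝ) < r - 2*0.6759893 := by nlinarith [hrlo]
  have hrs_lo : (728162859719334184447/250000000000000000000:ℝ) < r*s := by nlinarith [hrlo, hslo]
  have hrs_hi : r*s < (18204071494486291389/6250000000000000000:ℝ) := by nlinarith [hrhi, hshi, hrlo, hslo]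
  have hp3 : (0:ℝ) < r*s + 4*0.6759893 := by nlinarith [hrs_lo]
  have hp4 : (0:ℝ) < r*s - 4*0.6759893 := by nlinarith [hrs_lo]
  have hp5 : (0:ℝ) < 2*0.6759893 + s := by positivity
  have hGeq : Goff 0.6759893 = (Real.log ((r+2*0.6759893)/(r-2*0.6759893)) + Real.log ((r*s+4*0.6759893)/(r*s-4*0.6759893)))/(2*r)
      - Real.log (2*0.6759893+s)/2 := by
    rw [Goff, Real.log_div hp1.ne' hp2.ne', Real.log_div hp3.ne' hp4.ne', ← hrdef, ← hsdef]
    ring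
  have hL1 : Real.log ((r+2*0.6759893)/(r-2*0.6759893)) ≤ (20936310163197/10000000000000:ℝ) := by
    have harg : (r+2*0.6759893)/(r-2*0.6759893) ≤ (77100735189/9501805189:ℝ) := by
      rw [div_le_div_iff₀ hp2 (by norm_num)]
      nlinarith [hrlo]
    exact le_trans (Real.log_le_log (div_pos hp1 hp2) harg)
      (log_upper_bound 3 6 (x := (-1086293677/76014441512:ℝ)) (by rw [abs_of_nonpos (by norm_num)]) (by norm_num) (by norm_num) (by norm_num)
        (by norm_num [Finset.sum_range_succ]))
  have hL2 : Real.log ((r*s+4*0.6759893)/(r*s-4*0.6759893)) ≤ (514470798127/156250000000:ℝ) := by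
    have harg : (r*s+4*0.6759893)/(r*s-4*0.6759893) ≤ (1404152159719334184447/52173559719334184447:ℝ) := by
      rw [div_le_div_iff₀ hp4 (by norm_num)]
      nlinarith [hrs_lo]
    exact le_trans (Real.log_le_log (div_pos hp3 hp4) harg)
      (log_upper_bound 5 13 (x := (265401751299359717857/1669553911018693902304:ℝ)) (by rw [abs_of_nonneg (by norm_num)]) (by norm_num) (by norm_num) (by norm_num)
        (by norm_num [Finset.sum_range_succ]))
  have hL3 : (5548748006599/5000000000000:ℝ) ≤ Real.log (2*0.6759893+s) := by
    have harg : (30335986923/10000000000:ℝ) ≤ 2*0.6759893+s := by nlinarith [hslo]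
    exact le_trans (log_lower_bound 2 15 (x := (9664013077/40000000000:ℝ)) (by rw [abs_of_nonneg (by norm_num)]) (by norm_num) (by norm_num) (by norm_num)
        (by norm_num [Finset.sum_range_succ]))
      (Real.log_le_log (by norm_num) harg)
  have hL1pos : 0 ≤ Real.log ((r+2*0.6759893)/(r-2*0.6759893)) :=
    Real.log_nonneg (by rw [le_div_iff₀ hp2]; nlinarith [hrlo])
  have hL2pos : 0 ≤ Real.log ((r*s+4*0.6759893)/(r*s-4*0.6759893)) :=
    Real.log_nonneg (by rw [le_div_iff₀ hp4]; nlinarith [hrs_lo])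
  have hdiv : (Real.log ((r+2*0.6759893)/(r-2*0.6759893)) + Real.log ((r*s+4*0.6759893)/(r*s-4*0.6759893)))/(2*r)
      ≤ ((20936310163197/10000000000000:ℝ) + (514470798127/156250000000:ℝ))/(2*(43301270189/25000000000:ℝ)) := by
    apply div_le_div₀ (by norm_num) (by linarith) (by norm_num)
    linarith [hrlo]
  have hfin : ((20936310163197/10000000000000:ℝ) + (514470798127/156250000000:ℝ))/(2*(43301270189/25000000000:ℝ)) - (5548748006599/5000000000000:ℝ)/2 < 1 := by norm_num
  rw [hGeq]
  linarith

set_option maxHeartbeats 2000000 in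
lemma Goff_b_gt : 1 < Goff 0.6759894 := by
  have hrpos : 0 < Real.sqrt 3 := Real.sqrt_pos.mpr (by norm_num)
  have hrlo : (43301270189/25000000000:ℝ) < Real.sqrt 3 := (Real.lt_sqrt (by norm_num)).mpr (by norm_num)
  have hrhi : Real.sqrt 3 < (4330127019/2500000000:ℝ) := (Real.sqrt_lt' (by norm_num)).mpr (by norm_num)
  have hslo : (16816202531/10000000000:ℝ) < Real.sqrt (1+4*(0.6759894:ℝ)^2) := (Real.lt_sqrt (by norm_num)).mpr (by norm_num)
  have hshi : Real.sqrt (1+4*(0.6759894:ℝ)^2) < (4204050633/2500000000:ℝ) := (Real.sqrt_lt' (by norm_num)).mpr (by norm_num)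
  set r := Real.sqrt 3 with hrdef
  set s := Real.sqrt (1+4*(0.6759894:ℝ)^2) with hsdef
  have hspos : 0 < s := lt_trans (by norm_num) hslo
  have hp1 : (0:ℝ) < r + 2*0.6759894 := by positivity
  have hp2 : (0:ℝ) < r - 2*0.6759894 := by nlinarith [hrlo]
  have hrs_lo : (728162929347776648359/250000000000000000000:ℝ) < r*s := by nlinarith [hrlo, hslo]
  have hrs_hi : r*s < (18204073235197353027/6250000000000000000:ℝ) := by nlinarith [hrhi, hshi, hrlo, hslo]
  have hp3 : (0:ℝ) < r*s + 4*0.6759894 := by nlinarith [hrs_lo]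
  have hp4 : (0:ℝ) < r*s - 4*0.6759894 := by nlinarith [hrs_lo]
  have hp5 : (0:ℝ) < 2*0.6759894 + s := by positivity
  have hGeq : Goff 0.6759894 = (Real.log ((r+2*0.6759894)/(r-2*0.6759894)) + Real.log ((r*s+4*0.6759894)/(r*s-4*0.6759894)))/(2*r)
      - Real.log (2*0.6759894+s)/2 := by
    rw [Goff, Real.log_div hp1.ne' hp2.ne', Real.log_div hp3.ne' hp4.ne', ← hrdef, ← hsdef]
    ring
  have hL1 : (5234079014483/2500000000000:ℝ) ≤ Real.log ((r+2*0.6759894)/(r-2*0.6759894)) := by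
    have harg : (2570024673/316726673:ℝ) ≤ (r+2*0.6759894)/(r-2*0.6759894) := by
      rw [le_div_iff₀ hp2]
      nlinarith [hrhi]
    exact le_trans (log_lower_bound 3 6 (x := (-36211289/2533813384:ℝ)) (by rw [abs_of_nonpos (by norm_num)]) (by norm_num) (by norm_num) (by norm_num)
        (by norm_num [Finset.sum_range_succ]))
      (Real.log_le_log (by norm_num) harg)
  have hL2 : (32926138073181/10000000000000:ℝ) ≤ Real.log ((r*s+4*0.6759894)/(r*s-4*0.6759894)) := by
    have harg : (11701269411732451009/434779411732451009:ℝ) ≤ (r*s+4*0.6759894)/(r*s-4*0.6759894) := by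
      rw [le_div_iff₀ hp4]
      nlinarith [hrs_hi]
    exact le_trans (log_lower_bound 5 13 (x := (2211671763705981279/13912941175438432288:ℝ)) (by rw [abs_of_nonneg (by norm_num)]) (by norm_num) (by norm_num) (by norm_num)
        (by norm_num [Finset.sum_range_succ]))
      (Real.log_le_log (by norm_num) harg)
  have hL3 : Real.log (2*0.6759894+s) ≤ (2774374304107/2500000000000:ℝ) := by
    have harg : 2*0.6759894+s ≤ (7583997633/2500000000:ℝ) := by nlinarith [hshi]
    exact le_trans (Real.log_le_log hp5 harg)
      (log_upper_bound 2 15 (x := (2416002367/10000000000:ℝ)) (by rw [abs_of_nonneg (by norm_num)]) (by norm_num) (by norm_num) (by norm_num)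
        (by norm_num [Finset.sum_range_succ]))
  have hq12pos : (0:ℝ) ≤ (5234079014483/2500000000000:ℝ) + (32926138073181/10000000000000:ℝ) := by norm_num
  have hdiv : ((5234079014483/2500000000000:ℝ) + (32926138073181/10000000000000:ℝ))/(2*(4330127019/2500000000:ℝ))
      ≤ (Real.log ((r+2*0.6759894)/(r-2*0.6759894)) + Real.log ((r*s+4*0.6759894)/(r*s-4*0.6759894)))/(2*r) := by
    apply div_le_div₀ (by linarith) (by linarith) (by positivity)
    linarith [hrhi]
  have hfin : (1:ℝ) < ((5234079014483/2500000000000:ℝ) + (32926138073181/10000000000000:ℝ))/(2*(4330127019/2500000000:ℝ)) - (2774374304107/2500000000000:ℝ)/2 := by norm_num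
  rw [hGeq]
  linarith


theorem exists_unique_c_off :
    (∃! c : ℝ, c ∈ Set.Ioo 0 (Real.sqrt 3 / 2) ∧
      (∫ τ in (0:ℝ)..c, 1/(2 - Real.sqrt (1 + 4*τ^2))) = 1) ∧
    ∀ c : ℝ, c ∈ Set.Ioo 0 (Real.sqrt 3 / 2) →
      (∫ τ in (0:ℝ)..c, 1/(2 - Real.sqrt (1 + 4*τ^2))) = 1 →
        0.6759893 < c ∧ c < 0.6759894 := by
  have h3lo : (43301270189/25000000000:ℝ) < Real.sqrt 3 :=
    (Real.lt_sqrt (by norm_num)).mpr (by norm_num)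
  have hb : (0.6759894:ℝ) < Real.sqrt 3 / 2 := by
    rw [lt_div_iff₀ (by norm_num)]; norm_num at h3lo ⊢; linarith
  have haI : (0.6759893:ℝ) ∈ Set.Ico 0 (Real.sqrt 3/2) :=
    ⟨by norm_num, by linarith [hb]⟩
  have hbI : (0.6759894:ℝ) ∈ Set.Ico 0 (Real.sqrt 3/2) := ⟨by norm_num, hb⟩
  have hcont : ContinuousOn Goff (Set.Icc 0.6759893 0.6759894) := by
    intro t ht
    have h0t : (0:ℝ) ≤ t := le_trans (by norm_num) ht.1
    have h1t : t < Real.sqrt 3 / 2 := lt_of_le_of_lt ht.2 hb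
    exact (Goff_hasDerivAt h0t h1t).continuousAt.continuousWithinAt
  obtain ⟨c, hcmem, hceq⟩ :=
    intermediate_value_Ioo (by norm_num : (0.6759893:ℝ) ≤ 0.6759894) hcont
      (Set.mem_Ioo.mpr ⟨Goff_a_lt, Goff_b_gt⟩)
  have hc0 : (0:ℝ) < c := lt_trans (by norm_num) hcmem.1
  have hcs : c < Real.sqrt 3 / 2 := lt_trans hcmem.2 hb
  have hcIco : c ∈ Set.Ico 0 (Real.sqrt 3/2) := ⟨hc0.le, hcs⟩
  have hmem_bound : ∀ d : ℝ, d ∈ Set.Ioo 0 (Real.sqrt 3 / 2) →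
      (∫ τ in (0:ℝ)..d, 1/(2 - Real.sqrt (1 + 4*τ^2))) = 1 →
      0.6759893 < d ∧ d < 0.6759894 := by
    intro d hd hint
    have hGd : Goff d = 1 := by rw [← Goff_integral hd.1.le hd.2]; exact hint
    have hdIco : d ∈ Set.Ico 0 (Real.sqrt 3/2) := ⟨hd.1.le, hd.2⟩
    constructor
    · by_contra h
      push_neg at h
      rcases eq_or_lt_of_le h with h'|h'
      · rw [h'] at hGd; linarith [Goff_a_lt]
      · have := Goff_strictMono hdIco haI h'
        linarith [Goff_a_lt]
    · by_contra h
      push_neg at h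
      rcases eq_or_lt_of_le h with h'|h'
      · rw [← h'] at hGd; linarith [Goff_b_gt]
      · have := Goff_strictMono hbI hdIco h'
        linarith [Goff_b_gt]
  refine ⟨⟨c, ⟨⟨hc0, hcs⟩, ?_⟩, ?_⟩, hmem_bound⟩
  · rw [Goff_integral hc0.le hcs]; exact hceq
  · rintro y ⟨hymem, hyint⟩
    have hGy : Goff y = 1 := by rw [← Goff_integral hymem.1.le hymem.2]; exact hyint
    exact Goff_strictMono.injOn ⟨hymem.1.le, hymem.2⟩ hcIco (by rw [hGy, hceq])
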